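/- Let B be an N×N real symmetric positive semidefinite matrix with eigendecomposition B = Σᵢ λᵢ uᵢuᵢᵀ, eigenvalues λᵢ > 0, and η > 0 with η < 1/λ_max(B). Let Y ∈ [0,1]^N, m, n positive integers with N = mn, and define L_t = (1/m)·Σᵢ (1 - ηλᵢ)^(2t)·(uᵢᵀY)². Then for all t ≥ 0, L_t ≤ m·n²·(1 - η·λ̄)^q, where λ̄ = (1/N)·Σᵢ λᵢ, and q = 2t if t < 1/2 and q = 1 if t ≥ 1/2. -/

import Mathlib

theorem stmt_5 (N m n : ℕ) (hm : 0 < m) (hn : 0 < n) (hN : N = m * n)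
    (B : Matrix (Fin N) (Fin N) ℝ) (hB : B.PosSemidef)
    (lam : Fin N → ℝ) (u : Fin N → EuclideanSpace ℝ (Fin N))
    (hdecomp : ∀ i j : Fin N,
      B i j = ∑ l, lam l * (u l i * u l j))
    (hunit : ∀ l, ‖u l‖ = 1)
    (hpos : ∀ l, 0 < lam l)
    (η : ℝ) (hη : 0 < η) (hηmax : ∀ l, η < 1 / lam l)
    (Y : EuclideanSpace ℝ (Fin N)) (hY : ∀ i, Y i ∈ Set.Icc (0 : ℝ) 1)
    (t : ℝ) (ht : 0 ≤ t) :
    (1 : ℝ) / m * ∑ l, (1 - η * lam l) ^ (2 * t) * (inner ℝ (u l) Y : ℝ) ^ 2 ≤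
      m * n ^ 2 *
        (1 - η * ((1 : ℝ) / N * ∑ l, lam l)) ^
          (if t < (1 : ℝ) / 2 then 2 * t else 1) := by
  have hNpos : 0 < N := hN ▸ Nat.mul_pos hm hn
  have hNR : (0:ℝ) < N := by exact_mod_cast hNpos
  have hmR : (0:ℝ) < m := by exact_mod_cast hm
  have hx : ∀ l, 0 < 1 - η * lam l := by
    intro l
    have h := mul_lt_mul_of_pos_right (hηmax l) (hpos l)
    rw [one_div, inv_mul_cancel₀ (ne_of_gt (hpos l))] at h
    linarith
  set c : ℝ := 1 - η * ((1 : ℝ) / N * ∑ l, lam l) with hc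
  have hsumx : ∑ l, (1 - η * lam l) = N * c := by
    have h1 : ∑ l, (1 - η * lam l) = (N:ℝ) - η * ∑ l, lam l := by
      rw [Finset.sum_sub_distrib, Finset.sum_const, ← Finset.mul_sum]
      simp [Finset.card_univ]
    rw [h1, hc]
    field_simp
  have hne : Nonempty (Fin N) := ⟨⟨0, hNpos⟩⟩
  have hcpos : 0 < c := by
    have hsp : 0 < ∑ l, (1 - η * lam l) :=
      Finset.sum_pos (fun l _ => hx l) Finset.univ_nonempty
    rw [hsumx] at hsp
    nlinarith
  have hinner : ∀ l, (inner ℝ (u l) Y : ℝ) ^ 2 ≤ N := by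
    intro l
    have h1 : |(inner ℝ (u l) Y : ℝ)| ≤ ‖u l‖ * ‖Y‖ := abs_real_inner_le_norm _ _
    have h2 : (inner ℝ (u l) Y : ℝ) ^ 2 ≤ ‖Y‖ ^ 2 := by
      rw [← sq_abs]
      calc |(inner ℝ (u l) Y : ℝ)| ^ 2 ≤ (‖u l‖ * ‖Y‖) ^ 2 := by
            apply pow_le_pow_left₀ (abs_nonneg _) h1
        _ = ‖Y‖ ^ 2 := by rw [hunit l]; ring
    have h3 : ‖Y‖ ^ 2 = ∑ i, Y i ^ 2 := by
      rw [EuclideanSpace.norm_eq, Real.sq_sqrt (by positivity)]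
      simp [sq_abs]
    have h4 : ∑ i, Y i ^ 2 ≤ (N : ℝ) := by
      calc ∑ i, Y i ^ 2 ≤ ∑ _i : Fin N, (1:ℝ) := by
            apply Finset.sum_le_sum
            intro i _
            have := hY i
            nlinarith [this.1, this.2]
        _ = N := by simp
    linarith
  have hkey : ∑ l, (1 - η * lam l) ^ (2*t) ≤
      N * c ^ (if t < (1 : ℝ) / 2 then 2 * t else 1) := by
    by_cases htt : t < (1:ℝ)/2
    · simp only [if_pos htt]
      rcases eq_or_lt_of_le ht with h0 | h0
      · simp [← h0, Real.rpow_zero]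
      · -- Jensen: concavity of x ↦ x^(2t) for 0 < 2t < 1
        have hspos : 0 < 2 * t := by linarith
        have hs1 : 2 * t ≤ 1 := by linarith
        have hp : 1 ≤ 1 / (2 * t) := by
          rw [le_div_iff₀ hspos, one_mul]; exact hs1
        have hj := Real.arith_mean_le_rpow_mean Finset.univ (fun _ : Fin N => 1 / (N:ℝ))
          (fun l => (1 - η * lam l) ^ (2*t))
          (fun i _ => by positivity) (by simp [Finset.card_univ]; field_simp)
          (fun i _ => Real.rpow_nonneg (hx i).le _) hp
        have heq : ∀ l : Fin N, ((1 - η * lam l) ^ (2*t)) ^ ((1:ℝ) / (2*t))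
            = 1 - η * lam l := by
          intro l
          rw [← Real.rpow_mul (hx l).le, mul_one_div_cancel hspos.ne', Real.rpow_one]
        simp only [heq] at hj
        rw [one_div_one_div, ← Finset.mul_sum, ← Finset.mul_sum, hsumx] at hj
        have h2 : (1:ℝ)/(N:ℝ) * ((N:ℝ) * c) = c := by field_simp
        rw [h2] at hj
        rw [one_div, inv_mul_eq_div] at hj
        exact (div_le_iff₀' hNR).mp hj
    · simp only [if_neg htt]
      push_neg at htt
      have hs1 : (1:ℝ) ≤ 2 * t := by linarith
      calc ∑ l, (1 - η * lam l) ^ (2*t)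
          ≤ ∑ l, (1 - η * lam l) := by
            apply Finset.sum_le_sum
            intro l _
            have := Real.rpow_le_rpow_of_exponent_ge (hx l)
              (by linarith [mul_lt_mul_of_pos_left (hpos l) hη] : 1 - η * lam l ≤ 1) hs1
            rwa [Real.rpow_one] at this
        _ = N * c := hsumx
        _ = N * c ^ (1:ℝ) := by rw [Real.rpow_one]
  -- assemble
  have hq : (0:ℝ) ≤ c ^ (if t < (1 : ℝ) / 2 then 2 * t else 1) :=
    Real.rpow_nonneg hcpos.le _
  calc (1 : ℝ) / m * ∑ l, (1 - η * lam l) ^ (2 * t) * (inner ℝ (u l) Y : ℝ) ^ 2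
      ≤ (1 : ℝ) / m * ∑ l, (1 - η * lam l) ^ (2 * t) * (N:ℝ) := by
        apply mul_le_mul_of_nonneg_left _ (by positivity)
        apply Finset.sum_le_sum
        intro l _
        exact mul_le_mul_of_nonneg_left (hinner l) (Real.rpow_nonneg (hx l).le _)
    _ = (1 : ℝ) / m * (N:ℝ) * ∑ l, (1 - η * lam l) ^ (2 * t) := by
        rw [← Finset.sum_mul]; ring
    _ ≤ (1 : ℝ) / m * (N:ℝ) * ((N:ℝ) * c ^ (if t < (1 : ℝ) / 2 then 2 * t else 1)) := by
        apply mul_le_mul_of_nonneg_left hkey (by positivity)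
    _ = m * n ^ 2 * c ^ (if t < (1 : ℝ) / 2 then 2 * t else 1) := by
        subst hN
        push_cast
        field_simp
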